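/- Let A ∈ ℝ^{k×p} and B ∈ ℝ^{k×p} be matrices such that Aᵀ B = 0 and A Bᵀ = 0 (i.e., their row spaces and column spaces are orthogonal). Then the nuclear norm is additive: ‖A + B‖_* = ‖A‖_* + ‖B‖_*. -/

import Mathlib

open Matrix BigOperators

noncomputable def frobNorm {k p : ℕ} (A : Matrix (Fin k) (Fin p) ℝ) : ℝ :=
  Real.sqrt (∑ i, ∑ j, (A i j) ^ 2)

noncomputable def singVal {k p : ℕ} (A : Matrix (Fin k) (Fin p) ℝ) (i : Fin p) : ℝ :=
  Real.sqrt ((show (Aᵀ * A).IsHermitian by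
    simpa [Matrix.conjTranspose_eq_transpose_of_trivial] using
      Matrix.isHermitian_conjTranspose_mul_self A).eigenvalues i)

noncomputable def nuclearNorm {k p : ℕ} (A : Matrix (Fin k) (Fin p) ℝ) : ℝ :=
  ∑ i, singVal A i

noncomputable def opNorm {k p : ℕ} (A : Matrix (Fin k) (Fin p) ℝ) : ℝ :=
  ⨆ i, singVal A i

noncomputable def euclNorm {n : ℕ} (v : Fin n → ℝ) : ℝ :=
  Real.sqrt (∑ i, (v i) ^ 2)

open scoped MatrixOrder

noncomputable def Matrix.PosSemidef.sqrt {p : ℕ} {P : Matrix (Fin p) (Fin p) ℝ}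
    (_hP : P.PosSemidef) : Matrix (Fin p) (Fin p) ℝ :=
  CFC.sqrt P

lemma Matrix.PosSemidef.posSemidef_sqrt {p : ℕ} {P : Matrix (Fin p) (Fin p) ℝ}
    (hP : P.PosSemidef) : hP.sqrt.PosSemidef :=
  (CFC.sqrt_nonneg P).posSemidef

lemma Matrix.PosSemidef.sqrt_mul_self {p : ℕ} {P : Matrix (Fin p) (Fin p) ℝ}
    (hP : P.PosSemidef) : hP.sqrt * hP.sqrt = P :=
  CFC.sqrt_mul_sqrt_self P hP.nonneg

lemma Matrix.PosSemidef.eq_sqrt_of_sq_eq {p : ℕ} {P Q : Matrix (Fin p) (Fin p) ℝ}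
    {hP : P.PosSemidef} (hQ : Q.PosSemidef) (h : Q ^ 2 = P) : Q = hP.sqrt :=
  (CFC.sqrt_unique (by rw [← pow_two]; exact h) hQ.nonneg).symm

/-- trace of the PSD square root equals the sum of square roots of eigenvalues -/
lemma trace_sqrt {p : ℕ} {P : Matrix (Fin p) (Fin p) ℝ} (hP : P.PosSemidef) :
    hP.sqrt.trace = ∑ i, Real.sqrt (hP.1.eigenvalues i) := by
  rw [Matrix.PosSemidef.sqrt, CFC.sqrt_eq_cfc, cfc_nnreal_eq_real _ P, hP.1.cfc_eq,
    IsHermitian.cfc, Unitary.conjStarAlgAut_apply, Matrix.trace_mul_cycle]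
  have hU : (star hP.1.eigenvectorUnitary : Matrix (Fin p) (Fin p) ℝ) *
      (hP.1.eigenvectorUnitary : Matrix (Fin p) (Fin p) ℝ) = 1 := by
    simp [SetLike.coe_mem, hP.1.eigenvectorUnitary.2.1]
  rw [hU, Matrix.one_mul, Matrix.trace_diagonal]
  simp [max_eq_left (hP.eigenvalues_nonneg _)]

lemma sqrt_mul_eq_zero {p : ℕ} {P Q : Matrix (Fin p) (Fin p) ℝ}
    (hP : P.PosSemidef) (hQ : Q.PosSemidef) (h : P * Q = 0) :
    hP.sqrt * hQ.sqrt = 0 := by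
  have hPt : Pᵀ = P := by simpa using hP.1.eq
  have hQt : Qᵀ = Q := by simpa using hQ.1.eq
  have hQP : Q * P = 0 := by
    have := congrArg Matrix.transpose h
    simpa [Matrix.transpose_mul, hPt, hQt] using this
  -- first: P * sqrt Q = 0
  have h1 : P * hQ.sqrt = 0 := by
    have key : (P * hQ.sqrt) * (P * hQ.sqrt)ᴴ = 0 := by
      rw [Matrix.conjTranspose_mul, hQ.posSemidef_sqrt.1.eq, hP.1.eq]
      calc P * hQ.sqrt * (hQ.sqrt * P) = P * (hQ.sqrt * hQ.sqrt) * P := by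
            noncomm_ring
        _ = 0 := by rw [hQ.sqrt_mul_self, h, Matrix.zero_mul]
    exact Matrix.self_mul_conjTranspose_eq_zero.mp key
  have key : (hP.sqrt * hQ.sqrt)ᴴ * (hP.sqrt * hQ.sqrt) = 0 := by
    rw [Matrix.conjTranspose_mul, hP.posSemidef_sqrt.1.eq, hQ.posSemidef_sqrt.1.eq]
    calc hQ.sqrt * hP.sqrt * (hP.sqrt * hQ.sqrt)
        = hQ.sqrt * ((hP.sqrt * hP.sqrt) * hQ.sqrt) := by noncomm_ring
      _ = 0 := by rw [hP.sqrt_mul_self, h1, Matrix.mul_zero]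
  exact Matrix.conjTranspose_mul_self_eq_zero.mp key

lemma sqrt_congr {p : ℕ} {P Q : Matrix (Fin p) (Fin p) ℝ} (h : P = Q)
    (hP : P.PosSemidef) (hQ : Q.PosSemidef) : hP.sqrt = hQ.sqrt := by
  subst h; rfl

lemma nuclearNorm_eq_trace {k p : ℕ} (A : Matrix (Fin k) (Fin p) ℝ) :
    nuclearNorm A = (Matrix.posSemidef_conjTranspose_mul_self A).sqrt.trace := by
  rw [trace_sqrt]
  rfl

theorem stmt_3 {k p : ℕ} (A B : Matrix (Fin k) (Fin p) ℝ)
    (h1 : Aᵀ * B = 0) (h2 : A * Bᵀ = 0) :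
    nuclearNorm (A + B) = nuclearNorm A + nuclearNorm B := by
  have hA := Matrix.posSemidef_conjTranspose_mul_self A
  have hB := Matrix.posSemidef_conjTranspose_mul_self B
  have hAB := Matrix.posSemidef_conjTranspose_mul_self (A + B)
  have h1' : Aᴴ * B = 0 := by simpa using h1
  have h2' : A * Bᴴ = 0 := by simpa using h2
  have h1'' : Bᴴ * A = 0 := by
    have := congrArg Matrix.conjTranspose h1'
    simpa using this
  -- Gram matrix splits
  have hG : (A + B)ᴴ * (A + B) = Aᴴ * A + Bᴴ * B := by
    rw [Matrix.conjTranspose_add, Matrix.add_mul, Matrix.mul_add, Matrix.mul_add,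
      h1', h1'']
    abel
  -- products vanish
  have hPQ : (Aᴴ * A) * (Bᴴ * B) = 0 := by
    calc (Aᴴ * A) * (Bᴴ * B) = Aᴴ * (A * Bᴴ) * B := by
          simp only [Matrix.mul_assoc]
      _ = 0 := by rw [h2', Matrix.mul_zero, Matrix.zero_mul]
  have hsum : (Aᴴ * A + Bᴴ * B).PosSemidef := hA.add hB
  -- sqrt additivity
  have hsqrt : hsum.sqrt = hA.sqrt + hB.sqrt := by
    symm
    apply Matrix.PosSemidef.eq_sqrt_of_sq_eq (hA.posSemidef_sqrt.add hB.posSemidef_sqrt)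
    have hz : hA.sqrt * hB.sqrt = 0 := sqrt_mul_eq_zero hA hB hPQ
    have hat : hA.sqrtᵀ = hA.sqrt := by simpa using hA.posSemidef_sqrt.1.eq
    have hbt : hB.sqrtᵀ = hB.sqrt := by simpa using hB.posSemidef_sqrt.1.eq
    have hz' : hB.sqrt * hA.sqrt = 0 := by
      have := congrArg Matrix.transpose hz
      simpa [Matrix.transpose_mul, hat, hbt] using this
    rw [pow_two, Matrix.add_mul, Matrix.mul_add, Matrix.mul_add,
      hA.sqrt_mul_self, hB.sqrt_mul_self, hz, hz']
    abel
  have key : hAB.sqrt = hA.sqrt + hB.sqrt := by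
    rw [← hsqrt]
    exact sqrt_congr hG hAB hsum
  rw [nuclearNorm_eq_trace, nuclearNorm_eq_trace, nuclearNorm_eq_trace, key,
    Matrix.trace_add]
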